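/- Consider the Iwasawa manifold M = Γ\H_ℂ with the left-invariant (1,0)-forms ω₁ = dz₁, ω₂ = dz₂, ω₃ = dz₃ − z₂dz₁ satisfying dω₁ = dω₂ = 0, dω₃ = ω₁∧ω₂, and the balanced Hermitian form ω = (i/2)(ω₁∧ω̄₁ + ω₂∧ω̄₂ + ω₃∧ω̄₃). Then the torsion bivector field σ_ω of ω identically vanishes. -/

import Mathlib

/-!
STATEMENT 13: On the Iwasawa manifold (computed on the universal cover `ℂ³`,
coordinates `(z₁,z₂,z₃)`), with the left-invariant frame `ω₁ = dz₁`,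
`ω₂ = dz₂`, `ω₃ = dz₃ − z₂ dz₁` and the balanced Hermitian form
`ω = (i/2)(ω₁∧ω̄₁ + ω₂∧ω̄₂ + ω₃∧ω̄₃)`, the torsion bivector field
`(σ_ω)_{ī j̄} = i Σ_k g⁻¹dz̄_k( ∂ω(g⁻¹dz̄_i, g⁻¹dz̄_j, ∂̄_k) )`
vanishes identically. Here `∂ω = (i/2) ω₁∧ω₂∧ω̄₃` and the dual vector fields
are `g⁻¹dz̄₁ = 2(∂₁ + z₂∂₃)`, `g⁻¹dz̄₂ = 2∂₂`,
`g⁻¹dz̄₃ = 2(z̄₂∂₂ + (1+|z₂|²)∂₃)`.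
-/

open Complex

abbrev C3 := ℂ × ℂ × ℂ

/-- Wirtinger derivative `∂/∂z₁` on `ℂ³`. -/
noncomputable def pd1 (f : C3 → ℂ) (z : C3) : ℂ :=
  (1 / 2) * (fderiv ℝ f z (1, 0, 0) - Complex.I * fderiv ℝ f z (Complex.I, 0, 0))

/-- Wirtinger derivative `∂/∂z₂` on `ℂ³`. -/
noncomputable def pd2 (f : C3 → ℂ) (z : C3) : ℂ :=
  (1 / 2) * (fderiv ℝ f z (0, 1, 0) - Complex.I * fderiv ℝ f z (0, Complex.I, 0))

/-- Wirtinger derivative `∂/∂z₃` on `ℂ³`. -/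
noncomputable def pd3 (f : C3 → ℂ) (z : C3) : ℂ :=
  (1 / 2) * (fderiv ℝ f z (0, 0, 1) - Complex.I * fderiv ℝ f z (0, 0, Complex.I))

/-- The vector fields `g⁻¹dz̄_k`, acting as derivations on functions:
`g⁻¹dz̄₁ = 2(∂₁ + z₂∂₃)`, `g⁻¹dz̄₂ = 2∂₂`, `g⁻¹dz̄₃ = 2(z̄₂∂₂ + (1+|z₂|²)∂₃)`. -/
noncomputable def Vact : Fin 3 → (C3 → ℂ) → C3 → ℂ
  | 0 => fun f z => 2 * (pd1 f z + z.2.1 * pd3 f z)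
  | 1 => fun f z => 2 * pd2 f z
  | 2 => fun f z => 2 * ((starRingEnd ℂ) z.2.1 * pd2 f z
      + (1 + (Complex.normSq z.2.1 : ℂ)) * pd3 f z)

/-- `ω₁ = dz₁` evaluated on `g⁻¹dz̄_i`. -/
noncomputable def w1 : Fin 3 → C3 → ℂ := ![fun _ => 2, fun _ => 0, fun _ => 0]

/-- `ω₂ = dz₂` evaluated on `g⁻¹dz̄_i`. -/
noncomputable def w2 : Fin 3 → C3 → ℂ :=
  ![fun _ => 0, fun _ => 2, fun z => 2 * (starRingEnd ℂ) z.2.1]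

/-- `ω̄₃ = dz̄₃ − z̄₂ dz̄₁` evaluated on `∂̄_k`. -/
noncomputable def w3bar : Fin 3 → C3 → ℂ :=
  ![fun z => -(starRingEnd ℂ) z.2.1, fun _ => 0, fun _ => 1]

/-- `∂ω(g⁻¹dz̄_i, g⁻¹dz̄_j, ∂̄_k)` for `∂ω = (i/2) ω₁∧ω₂∧ω̄₃`. -/
noncomputable def delOmegaIw (i j k : Fin 3) : C3 → ℂ := fun z =>
  (Complex.I / 2) * (w1 i z * w2 j z - w1 j z * w2 i z) * w3bar k z

/-- The torsion bivector field components
`(σ_ω)_{ī j̄} = i Σ_k g⁻¹dz̄_k( ∂ω(g⁻¹dz̄_i, g⁻¹dz̄_j, ∂̄_k) )`. -/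
noncomputable def sigmaIwasawa (i j : Fin 3) (z : C3) : ℂ :=
  Complex.I * ∑ k : Fin 3, Vact k (delOmegaIw i j k) z


noncomputable def projConj : C3 →L[ℝ] ℂ :=
  Complex.conjCLE.toContinuousLinearMap.comp
    ((ContinuousLinearMap.fst ℝ ℂ ℂ).comp (ContinuousLinearMap.snd ℝ ℂ (ℂ × ℂ)))

lemma fderiv_anti (a b c : ℂ) (z v : C3) :
    fderiv ℝ (fun z : C3 => a + b * (starRingEnd ℂ) z.2.1 + c * (starRingEnd ℂ) z.2.1 ^ 2) z v
      = (b + 2 * c * (starRingEnd ℂ) z.2.1) * (starRingEnd ℂ) v.2.1 := by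
  have hl : HasFDerivAt (fun z : C3 => (starRingEnd ℂ) z.2.1) projConj z :=
    projConj.hasFDerivAt
  have hh : HasDerivAt (fun w : ℂ => a + b * w + c * w ^ 2)
      (b + 2 * c * (starRingEnd ℂ) z.2.1) ((starRingEnd ℂ) z.2.1) := by
    have h1 := ((hasDerivAt_id ((starRingEnd ℂ) z.2.1)).const_mul b).const_add a
    have h2 := (hasDerivAt_pow 2 ((starRingEnd ℂ) z.2.1)).const_mul c
    have := h1.add h2
    exact this.congr_deriv (by ring)
  have hf := (hh.hasFDerivAt.restrictScalars ℝ).comp z hl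
  have hf' : HasFDerivAt
      (fun z : C3 => a + b * (starRingEnd ℂ) z.2.1 + c * (starRingEnd ℂ) z.2.1 ^ 2)
      (((ContinuousLinearMap.smulRight (1 : ℂ →L[ℂ] ℂ)
        (b + 2 * c * (starRingEnd ℂ) z.2.1)).restrictScalars ℝ).comp projConj) z := hf
  rw [hf'.fderiv]
  simp [projConj]
  ring

lemma pd1_anti (a b c : ℂ) (z : C3) :
    pd1 (fun z : C3 => a + b * (starRingEnd ℂ) z.2.1 + c * (starRingEnd ℂ) z.2.1 ^ 2) z = 0 := by
  simp [pd1, fderiv_anti]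

lemma pd2_anti (a b c : ℂ) (z : C3) :
    pd2 (fun z : C3 => a + b * (starRingEnd ℂ) z.2.1 + c * (starRingEnd ℂ) z.2.1 ^ 2) z = 0 := by
  simp [pd2, fderiv_anti, Complex.conj_I]
  ring_nf
  simp [Complex.I_sq]

lemma pd3_anti (a b c : ℂ) (z : C3) :
    pd3 (fun z : C3 => a + b * (starRingEnd ℂ) z.2.1 + c * (starRingEnd ℂ) z.2.1 ^ 2) z = 0 := by
  simp [pd3, fderiv_anti]

lemma vact_poly (k : Fin 3) (a b c : ℂ) (z : C3) :
    Vact k (fun z : C3 => a + b * (starRingEnd ℂ) z.2.1 + c * (starRingEnd ℂ) z.2.1 ^ 2) z = 0 := by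
  fin_cases k <;> simp [Vact, pd1_anti, pd2_anti, pd3_anti]

lemma w1_const (i : Fin 3) : ∃ a : ℂ, w1 i = fun _ => a := by
  fin_cases i
  · exact ⟨2, rfl⟩
  · exact ⟨0, rfl⟩
  · exact ⟨0, rfl⟩

lemma w2_lin (j : Fin 3) : ∃ a b : ℂ, w2 j = fun z => a + b * (starRingEnd ℂ) z.2.1 := by
  fin_cases j
  · exact ⟨0, 0, by funext z; simp [w2]⟩
  · exact ⟨2, 0, by funext z; simp [w2]⟩
  · exact ⟨0, 2, by funext z; simp [w2]⟩

lemma w3_lin (k : Fin 3) : ∃ a b : ℂ, w3bar k = fun z => a + b * (starRingEnd ℂ) z.2.1 := by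
  fin_cases k
  · exact ⟨0, -1, by funext z; simp [w3bar]⟩
  · exact ⟨0, 0, by funext z; simp [w3bar]⟩
  · exact ⟨1, 0, by funext z; simp [w3bar]⟩

lemma delOmega_form (i j k : Fin 3) :
    ∃ a b c : ℂ, delOmegaIw i j k
      = fun z => a + b * (starRingEnd ℂ) z.2.1 + c * (starRingEnd ℂ) z.2.1 ^ 2 := by
  obtain ⟨a1, h1⟩ := w1_const i
  obtain ⟨a2, h2⟩ := w1_const j
  obtain ⟨b1, c1, h3⟩ := w2_lin j
  obtain ⟨b2, c2, h4⟩ := w2_lin i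
  obtain ⟨d, e, h5⟩ := w3_lin k
  refine ⟨Complex.I / 2 * (a1 * b1 - a2 * b2) * d,
    Complex.I / 2 * ((a1 * b1 - a2 * b2) * e + (a1 * c1 - a2 * c2) * d),
    Complex.I / 2 * (a1 * c1 - a2 * c2) * e, ?_⟩
  funext z
  simp only [delOmegaIw, h1, h2, h3, h4, h5]
  ring

/-- The torsion bivector field of the balanced Iwasawa metric vanishes. -/
theorem iwasawa_torsion_bivector_vanishes :
    ∀ (i j : Fin 3) (z : C3), sigmaIwasawa i j z = 0 := by
  intro i j z
  have h : ∀ k : Fin 3, Vact k (delOmegaIw i j k) z = 0 := by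
    intro k
    obtain ⟨a, b, c, hf⟩ := delOmega_form i j k
    rw [hf]
    exact vact_poly k a b c z
  simp [sigmaIwasawa, h]
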